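/- For s ∈ {0,1}, the alternating series (1/(q;q)_∞) · Σ_{n∈ℤ} ( q^{n(10n+1+2s)} − q^{(2n+1)(5n+2−s)} ) equals Σ_{n=0}^∞ q^{n²+sn}/(q;q)_n, as formal power series in q. -/

import Mathlib

/-!
For `s ∈ {0,1}`, the alternating (bosonic) bilateral series
`(1/(q;q)_∞) Σ_{n∈ℤ} (q^{n(10n+1+2s)} − q^{(2n+1)(5n+2−s)})`
equals the Rogers-Ramanujan sum side `Σ_{n≥0} q^{n²+sn}/(q;q)_n`,
as formal power series in `q`.
-/

noncomputable instance : TopologicalSpace (PowerSeries ℚ) :=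
  TopologicalSpace.induced (fun f (n : ℕ) => (PowerSeries.coeff n) f) inferInstance

noncomputable def q : PowerSeries ℚ := PowerSeries.X

/-- `(q;q)_n` -/
noncomputable def poch (n : ℕ) : PowerSeries ℚ :=
  ∏ i ∈ Finset.range n, (1 - q ^ (i + 1))

/-- `(q;q)_∞` -/
noncomputable def pochInf : PowerSeries ℚ := ∏' i : ℕ, (1 - q ^ (i + 1))

namespace RR
open PowerSeries Filter Finset Topology

lemma emb_injective : Function.Injective (fun (f : PowerSeries ℚ) (n : ℕ) => (PowerSeries.coeff n) f) :=
  fun f g h => PowerSeries.ext fun n => congrFun h n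

instance : T2Space (PowerSeries ℚ) :=
  Topology.IsEmbedding.t2Space ⟨⟨rfl⟩, emb_injective⟩

lemma hasSum_iff_coeff {ι : Type*} (g : ι → PowerSeries ℚ) (L : PowerSeries ℚ) :
    HasSum g L ↔ ∀ d, HasSum (fun i => (PowerSeries.coeff d) (g i)) ((PowerSeries.coeff d) L) := by
  have h : 𝓝 L = Filter.comap (fun f (n : ℕ) => (PowerSeries.coeff n) f)
      (𝓝 (fun n => (PowerSeries.coeff n) L)) := nhds_induced _ L
  unfold HasSum
  rw [h, Filter.tendsto_comap_iff,
    show ((fun f (n : ℕ) => (PowerSeries.coeff n) f) ∘ (fun s : Finset ι => ∑ i ∈ s, g i))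
      = fun (s : Finset ι) (n : ℕ) => ∑ i ∈ s, (PowerSeries.coeff n) (g i) by
        funext s n; simp,
    tendsto_pi_nhds]

lemma hasProd_iff_coeff {ι : Type*} (g : ι → PowerSeries ℚ) (L : PowerSeries ℚ) :
    HasProd g L ↔ ∀ d, Tendsto (fun s : Finset ι => (PowerSeries.coeff d) (∏ i ∈ s, g i))
      atTop (𝓝 ((PowerSeries.coeff d) L)) := by
  have h : 𝓝 L = Filter.comap (fun f (n : ℕ) => (PowerSeries.coeff n) f)
      (𝓝 (fun n => (PowerSeries.coeff n) L)) := nhds_induced _ L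
  unfold HasProd
  rw [h, Filter.tendsto_comap_iff, tendsto_pi_nhds]
  exact Iff.rfl

lemma hasSum_of_finite {ι : Type*} (g : ι → PowerSeries ℚ) (S : ℕ → Finset ι)
    (h : ∀ d, ∀ i ∉ S d, (PowerSeries.coeff d) (g i) = 0) :
    HasSum g (PowerSeries.mk fun d => ∑ i ∈ S d, (PowerSeries.coeff d) (g i)) := by
  rw [hasSum_iff_coeff]
  intro d
  simpa using hasSum_sum_of_ne_finset_zero (h d)

/-! ### divisibility tools -/

lemma coeff_eq_of_dvd {F G : PowerSeries ℚ} {d m : ℕ}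
    (h : (PowerSeries.X : PowerSeries ℚ) ^ d ∣ F - G) (hm : m < d) :
    (PowerSeries.coeff m) F = (PowerSeries.coeff m) G := by
  have := (PowerSeries.X_pow_dvd_iff.mp h) m hm
  rw [map_sub, sub_eq_zero] at this
  exact this

lemma dvd_mul_of_dvd {d : ℕ} {A B : PowerSeries ℚ} (u : PowerSeries ℚ)
    (h : (PowerSeries.X : PowerSeries ℚ) ^ d ∣ A - B) :
    (PowerSeries.X : PowerSeries ℚ) ^ d ∣ u * A - u * B := by
  rw [← mul_sub]; exact h.mul_left u

lemma dvd_sub_mul {d : ℕ} {A B A' B' : PowerSeries ℚ}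
    (h : (PowerSeries.X : PowerSeries ℚ) ^ d ∣ A - B)
    (h' : (PowerSeries.X : PowerSeries ℚ) ^ d ∣ A' - B') :
    (PowerSeries.X : PowerSeries ℚ) ^ d ∣ A * A' - B * B' := by
  have : A * A' - B * B' = A * (A' - B') + (A - B) * B' := by ring
  rw [this]
  exact dvd_add (h'.mul_left A) (h.mul_right B')

/-! ### poch basics -/

lemma poch_zero : poch 0 = 1 := Finset.prod_range_zero _

lemma poch_succ (n : ℕ) : poch (n + 1) = poch n * (1 - q ^ (n + 1)) :=
  Finset.prod_range_succ _ n

lemma constantCoeff_poch (n : ℕ) : PowerSeries.constantCoeff (poch n) = 1 := by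
  induction n with
  | zero => simp [poch_zero]
  | succ n ih => rw [poch_succ, map_mul, ih, one_mul, map_sub, map_one, map_pow]
                 simp [q]

lemma poch_mul_inv (n : ℕ) : poch n * (poch n)⁻¹ = 1 :=
  PowerSeries.mul_inv_cancel _ (by rw [constantCoeff_poch]; norm_num)

lemma inv_mul_poch (n : ℕ) : (poch n)⁻¹ * poch n = 1 := by
  rw [mul_comm]; exact poch_mul_inv n

lemma poch_inv_succ (n : ℕ) : (poch n)⁻¹ = (1 - q ^ (n + 1)) * (poch (n + 1))⁻¹ := by
  have h := poch_mul_inv (n + 1)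
  calc (poch n)⁻¹ = (poch n)⁻¹ * (poch (n+1) * (poch (n+1))⁻¹) := by rw [h, mul_one]
    _ = ((poch n)⁻¹ * poch n) * ((1 - q ^ (n+1)) * (poch (n+1))⁻¹) := by rw [poch_succ]; ring
    _ = (1 - q ^ (n + 1)) * (poch (n + 1))⁻¹ := by rw [inv_mul_poch, one_mul]

lemma X_pow_dvd_poch_sub {d a b : ℕ} (ha : d ≤ a + 1) (hab : a ≤ b) :
    (PowerSeries.X : PowerSeries ℚ) ^ d ∣ poch b - poch a := by
  induction b with
  | zero => have : a = 0 := Nat.le_zero.mp hab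
            simp [this]
  | succ b ih =>
    rcases Nat.lt_or_ge a (b + 1) with hlt | hge
    · have hab' : a ≤ b := by omega
      have h1 := ih hab'
      have : poch (b+1) - poch a = (poch b - poch a) + (- (poch b * q ^ (b+1))) := by
        rw [poch_succ]; ring
      rw [this]
      refine dvd_add h1 (dvd_neg.mpr ?_)
      have hq : (PowerSeries.X : PowerSeries ℚ) ^ d ∣ q ^ (b+1) := by
        rw [q]; exact pow_dvd_pow _ (by omega)
      exact hq.mul_left (poch b)
    · have : a = b + 1 := by omega
      simp [this]

lemma poch_inv_sub_dvd {d a b : ℕ} (ha : d ≤ a + 1) (hab : a ≤ b) :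
    (PowerSeries.X : PowerSeries ℚ) ^ d ∣ (poch b)⁻¹ - (poch a)⁻¹ := by
  have key : (poch b)⁻¹ - (poch a)⁻¹ = (poch b)⁻¹ * (poch a - poch b) * (poch a)⁻¹ := by
    have h1 := poch_mul_inv a
    have h2 := inv_mul_poch b
    calc (poch b)⁻¹ - (poch a)⁻¹
        = (poch b)⁻¹ * (poch a * (poch a)⁻¹) - ((poch b)⁻¹ * poch b) * (poch a)⁻¹ := by
          rw [h1, h2, mul_one, one_mul]
      _ = (poch b)⁻¹ * (poch a - poch b) * (poch a)⁻¹ := by ring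
  rw [key]
  have h : (PowerSeries.X : PowerSeries ℚ) ^ d ∣ poch a - poch b := by
    have := dvd_neg.mpr (X_pow_dvd_poch_sub ha hab)
    rwa [neg_sub] at this
  exact (h.mul_left _).mul_right _

end RR

/-! ### Gaussian binomials -/
namespace RR2
open PowerSeries Finset RR

noncomputable def Gz (n : ℕ) (k : ℤ) : PowerSeries ℚ :=
  if 0 ≤ k ∧ k ≤ n then poch n * (poch k.toNat)⁻¹ * (poch (n - k.toNat))⁻¹ else 0

lemma Gz_neg {n : ℕ} {k : ℤ} (h : k < 0) : Gz n k = 0 := by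
  rw [Gz, if_neg]; omega

lemma Gz_gt {n : ℕ} {k : ℤ} (h : (n : ℤ) < k) : Gz n k = 0 := by
  rw [Gz, if_neg]; omega

lemma one_inv' : (1 : PowerSeries ℚ)⁻¹ = 1 := by simp

lemma Gz_zero (n : ℕ) : Gz n 0 = 1 := by
  rw [Gz, if_pos (by omega)]
  simp only [Int.toNat_zero, poch_zero, one_inv', Nat.sub_zero, mul_one]
  exact poch_mul_inv n

lemma Gz_self (n : ℕ) : Gz n n = 1 := by
  rw [Gz, if_pos (by omega)]
  simp only [Int.toNat_natCast, Nat.sub_self, poch_zero, one_inv', mul_one]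
  exact poch_mul_inv n

lemma Gz_of_mem {n : ℕ} {k : ℤ} (h0 : 0 ≤ k) (h1 : k ≤ n) :
    Gz n k = poch n * (poch k.toNat)⁻¹ * (poch (n - k.toNat))⁻¹ := by
  rw [Gz, if_pos ⟨h0, h1⟩]

lemma key1 (c m : ℕ) :
    poch (c+m+2) * (poch (c+1))⁻¹ * (poch (m+1))⁻¹
      = poch (c+m+1) * (poch c)⁻¹ * (poch (m+1))⁻¹
        + q^(c+1) * (poch (c+m+1) * (poch (c+1))⁻¹ * (poch m)⁻¹) := by
  rw [show c+m+2 = (c+m+1)+1 from rfl, poch_succ (c+m+1), poch_inv_succ c, poch_inv_succ m]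
  ring

lemma key2 (c m : ℕ) :
    poch (c+m+2) * (poch (c+1))⁻¹ * (poch (m+1))⁻¹
      = poch (c+m+1) * (poch (c+1))⁻¹ * (poch m)⁻¹
        + q^(m+1) * (poch (c+m+1) * (poch c)⁻¹ * (poch (m+1))⁻¹) := by
  rw [show c+m+2 = (c+m+1)+1 from rfl, poch_succ (c+m+1), poch_inv_succ c, poch_inv_succ m]
  ring

lemma ruleA (n : ℕ) (k : ℤ) :
    Gz (n+1) k = Gz n (k-1) + q^(k.toNat) * Gz n k := by
  rcases lt_or_ge k 0 with h | h
  · rw [Gz_neg h, Gz_neg (by omega : k - 1 < 0), Gz_neg (by omega : k < 0)]; ring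
  rcases eq_or_lt_of_le h with h0 | h0
  · rw [← h0, Gz_zero, Gz_neg (by omega : (0:ℤ) - 1 < 0), Gz_zero]; simp
  rcases lt_or_ge (n : ℤ) k with hgt | hle
  · rcases eq_or_lt_of_le (by omega : (n:ℤ) + 1 ≤ k) with he | he
    · subst he
      rw [show ((n:ℤ)+1) = ((n+1:ℕ):ℤ) by push_cast; ring, Gz_self,
        show ((n+1:ℕ):ℤ) - 1 = (n:ℤ) by push_cast; ring, Gz_self,
        Gz_gt (by omega : (n:ℤ) < ((n+1:ℕ):ℤ))]
      ring
    · rw [Gz_gt (by push_cast; omega : ((n+1:ℕ):ℤ) < k), Gz_gt (by omega : (n:ℤ) < k - 1),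
        Gz_gt (by omega : (n:ℤ) < k)]; ring
  · obtain ⟨c, hc⟩ : ∃ c, k.toNat = c + 1 := ⟨k.toNat - 1, by omega⟩
    obtain ⟨m, hm⟩ : ∃ m, n = k.toNat + m := ⟨n - k.toNat, by omega⟩
    rw [Gz_of_mem (by omega) (by push_cast; omega), Gz_of_mem (by omega) (by omega),
      Gz_of_mem (by omega) (by omega)]
    rw [show (k-1).toNat = c by omega, hc]
    rw [show n + 1 - (c+1) = m + 1 by omega, show n - c = m + 1 by omega,
      show n - (c+1) = m by omega, show n + 1 = c + m + 2 by omega,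
      show n = c + m + 1 by omega]
    exact key1 c m

lemma ruleB (n : ℕ) (k : ℤ) :
    Gz (n+1) k = Gz n k + q^(((n:ℤ)+1-k).toNat) * Gz n (k-1) := by
  rcases lt_or_ge k 0 with h | h
  · rw [Gz_neg h, Gz_neg (by omega : k - 1 < 0), Gz_neg (by omega : k < 0)]; ring
  rcases eq_or_lt_of_le h with h0 | h0
  · rw [← h0, Gz_zero, Gz_zero, Gz_neg (by omega : (0:ℤ) - 1 < 0)]; ring
  rcases lt_or_ge (n : ℤ) k with hgt | hle
  · rcases eq_or_lt_of_le (by omega : (n:ℤ) + 1 ≤ k) with he | he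
    · subst he
      rw [show ((n:ℤ)+1) = ((n+1:ℕ):ℤ) by push_cast; ring, Gz_self,
        show ((n+1:ℕ):ℤ) - 1 = (n:ℤ) by push_cast; ring, Gz_self,
        Gz_gt (by omega : (n:ℤ) < ((n+1:ℕ):ℤ))]
      simp
    · rw [Gz_gt (by push_cast; omega : ((n+1:ℕ):ℤ) < k), Gz_gt (by omega : (n:ℤ) < k - 1),
        Gz_gt (by omega : (n:ℤ) < k)]; ring
  · obtain ⟨c, hc⟩ : ∃ c, k.toNat = c + 1 := ⟨k.toNat - 1, by omega⟩
    obtain ⟨m, hm⟩ : ∃ m, n = k.toNat + m := ⟨n - k.toNat, by omega⟩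
    rw [Gz_of_mem (by omega) (by push_cast; omega), Gz_of_mem (by omega) (by omega),
      Gz_of_mem (by omega) (by omega)]
    rw [show (((n:ℤ)+1-k).toNat) = m + 1 by omega]
    rw [show (k-1).toNat = c by omega, hc]
    rw [show n + 1 - (c+1) = m + 1 by omega, show n - c = m + 1 by omega,
      show n - (c+1) = m by omega, show n + 1 = c + m + 2 by omega,
      show n = c + m + 1 by omega]
    exact key2 c m

lemma P1 (b : ℕ) (k : ℤ) :
    Gz (b+2) k = Gz (b+1) k + q^(b+1) * Gz b (k-1)
      + q^(((b:ℤ)+2-k).toNat) * Gz b (k-2) := by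
  rw [show b + 2 = (b+1)+1 from rfl, ruleB (b+1) k,
    show ((b+1:ℕ):ℤ) + 1 - k = (b:ℤ)+2-k by push_cast; ring,
    ruleA b (k-1), show k - 1 - 1 = k - 2 by ring]
  by_cases hk : 1 ≤ k ∧ k ≤ (b:ℤ) + 2
  · have hE : (((b:ℤ)+2-k).toNat) + ((k-1).toNat) = b + 1 := by omega
    rw [← hE, pow_add]
    ring
  · have hz : Gz b (k-1) = 0 := by
      rcases (by omega : k - 1 < 0 ∨ (b:ℤ) < k - 1) with h | h
      · exact Gz_neg h
      · exact Gz_gt h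
    rw [hz]; ring

lemma P2 (b : ℕ) (k : ℤ) :
    Gz (b+2) k = Gz (b+1) (k-1) + q^(k.toNat) * Gz b k
      + q^(k.toNat + (((b:ℤ)+1-k).toNat)) * Gz b (k-1) := by
  rw [show b + 2 = (b+1)+1 from rfl, ruleA (b+1) k, ruleB b k,
    pow_add]
  ring

end RR2

/-! ### Schur polynomials -/
namespace RR3
open PowerSeries Finset RR RR2

def E (s : ℕ) (j : ℤ) : ℕ := (j * (5*j + 1 + 2*(s:ℤ))).toNat / 2

lemma twoE {s : ℕ} (hs : s ≤ 1) (j : ℤ) : 2 * (E s j : ℤ) = j * (5*j + 1 + 2*(s:ℤ)) := by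
  obtain ⟨c, hc⟩ := Int.even_mul_succ_self j
  have hy : j * (5*j + 1 + 2*(s:ℤ)) = 2*(2*j*j + c + (s:ℤ)*j) := by linear_combination hc
  have hy0 : 0 ≤ 2*j*j + c + (s:ℤ)*j := by
    have hs' : (s:ℤ) ≤ 1 := by exact_mod_cast hs
    rcases le_or_gt 0 j with h | h
    · nlinarith [mul_nonneg h (by positivity : (0:ℤ) ≤ 5*j + 1 + 2*(s:ℤ))]
    · nlinarith [mul_nonneg (by omega : (0:ℤ) ≤ -j) (by omega : (0:ℤ) ≤ -(5*j + 1 + 2*(s:ℤ)))]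
  rw [E, hy]
  omega

lemma E_step {s : ℕ} (hs : s ≤ 1) (j : ℤ) : (E s (j+1) : ℤ) = E s j + 5*j + 3 + s := by
  have h1 := twoE hs j
  have h2 := twoE hs (j+1)
  have key : 2*(E s (j+1):ℤ) - 2*(E s j) = 10*j + 6 + 2*s := by linear_combination h2 - h1
  omega

noncomputable def sg (j : ℤ) : PowerSeries ℚ := if Even j then 1 else -1

lemma sg_succ (j : ℤ) : sg (j+1) = - sg j := by
  by_cases h : Even j
  · rw [sg, sg, if_pos h, if_neg (by simpa [Int.even_add_one] using h)]
  · rw [sg, sg, if_neg h, if_pos (by simpa [Int.even_add_one] using h)]; ring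

noncomputable def bt (s N : ℕ) (j : ℤ) : PowerSeries ℚ :=
  sg j * (q ^ E s j * Gz (N + s) (((N:ℤ) - 5*j)/2))

lemma bt_eq_zero {s N : ℕ} {j : ℤ} (hs : s ≤ 1) (h : j < -(N:ℤ) - 1 ∨ (N:ℤ) < 5*j) :
    bt s N j = 0 := by
  rw [bt]
  rcases h with h | h
  · rw [Gz_gt (by push_cast; omega : ((N + s : ℕ):ℤ) < ((N:ℤ) - 5*j)/2)]
    ring
  · rw [Gz_neg (by omega : ((N:ℤ) - 5*j)/2 < 0)]
    ring

noncomputable def D (s N : ℕ) : PowerSeries ℚ :=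
  ∑ j ∈ Finset.Icc (-(N:ℤ)-9) ((N:ℤ)+12), bt s N j

lemma sum_bt {s N : ℕ} (hs : s ≤ 1) {a b : ℤ} (ha : a ≤ -(N:ℤ)-2) (hb : (N:ℤ)+1 ≤ b) :
    ∑ j ∈ Finset.Icc a b, bt s N j = D s N := by
  rw [D]
  have base : ∀ (a' b' : ℤ), a' ≤ -(N:ℤ)-2 → (N:ℤ)+1 ≤ b' →
      ∑ j ∈ Finset.Icc a' b', bt s N j = ∑ j ∈ Finset.Icc (-(N:ℤ)-2) ((N:ℤ)+1), bt s N j := by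
    intro a' b' ha' hb'
    symm
    apply Finset.sum_subset (Finset.Icc_subset_Icc ha' hb')
    intro x hx hnx
    simp only [Finset.mem_Icc] at hx hnx
    exact bt_eq_zero hs (by omega)
  rw [base a b ha hb, base (-(N:ℤ)-9) ((N:ℤ)+12) (by omega) (by omega)]

lemma star (s N : ℕ) (k : ℤ) (e e' : ℕ) (he : (e':ℤ) = e + ((N:ℤ)+s+4) - 2*k) :
    q^e * (Gz (N+s+2) k - Gz (N+s+1) k - q^(N+s+1) * Gz (N+s) (k-1))
      = q^e' * (Gz (N+s+2) (k-2) - Gz (N+s+1) (k-3) - q^(N+s+1) * Gz (N+s) (k-3)) := by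
  have hL : Gz (N+s+2) k - Gz (N+s+1) k - q^(N+s+1) * Gz (N+s) (k-1)
      = q^((((N+s:ℕ):ℤ)+2-k).toNat) * Gz (N+s) (k-2) := by
    linear_combination P1 (N+s) k
  have hR : Gz (N+s+2) (k-2) - Gz (N+s+1) (k-3) - q^(N+s+1) * Gz (N+s) (k-3)
      = q^((k-2).toNat) * Gz (N+s) (k-2)
        + (q^((k-2).toNat + ((((N+s:ℕ):ℤ)+1-(k-2)).toNat)) - q^(N+s+1)) * Gz (N+s) (k-3) := by
    have h := P2 (N+s) (k-2)
    rw [show k - 2 - 1 = k - 3 by ring] at h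
    linear_combination h
  rw [hL, hR]
  by_cases hk : 2 ≤ k ∧ k ≤ (N:ℤ)+s+2
  · have hB : (k-2).toNat + ((((N+s:ℕ):ℤ)+1-(k-2)).toNat) = N+s+1 := by
      push_cast; omega
    rw [hB, sub_self, zero_mul, add_zero, ← mul_assoc, ← mul_assoc, ← pow_add, ← pow_add,
      show e + ((((N+s:ℕ):ℤ)+2-k).toNat) = e' + (k-2).toNat by push_cast; omega]
  · have hz2 : Gz (N+s) (k-2) = 0 := by
      rcases (by omega : k - 2 < 0 ∨ ((N+s:ℕ):ℤ) < k - 2) with h | h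
      · exact Gz_neg h
      · exact Gz_gt h
    rcases (by omega : k ≤ 1 ∨ k = (N:ℤ)+s+3 ∨ (N:ℤ)+s+4 ≤ k) with h | h | h
    · rw [hz2, Gz_neg (by omega : k - 3 < 0)]; ring
    · have hB : (k-2).toNat + ((((N+s:ℕ):ℤ)+1-(k-2)).toNat) = N+s+1 := by
        push_cast; omega
      rw [hz2, hB, sub_self]; ring
    · rw [hz2, Gz_gt (by push_cast; omega : ((N+s:ℕ):ℤ) < k - 3)]; ring

lemma pair {s : ℕ} (hs : s ≤ 1) (N : ℕ) (j k : ℤ) (hk : (N:ℤ) + 2 - 5*j = 2*k+1) :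
    (bt s (N+2) j - bt s (N+1) j - q^(N+s+1) * bt s N j)
      + (bt s (N+2) (j+1) - bt s (N+1) (j+1) - q^(N+s+1) * bt s N (j+1)) = 0 := by
  have h1 : (((N+2:ℕ):ℤ) - 5*j)/2 = k := by push_cast; omega
  have h2 : (((N+1:ℕ):ℤ) - 5*j)/2 = k := by push_cast; omega
  have h3 : (((N:ℕ):ℤ) - 5*j)/2 = k - 1 := by push_cast; omega
  have h4 : (((N+2:ℕ):ℤ) - 5*(j+1))/2 = k - 2 := by push_cast; omega
  have h5 : (((N+1:ℕ):ℤ) - 5*(j+1))/2 = k - 3 := by push_cast; omega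
  have h6 : (((N:ℕ):ℤ) - 5*(j+1))/2 = k - 3 := by push_cast; omega
  have hstar := star s N k (E s j) (E s (j+1))
    (by rw [E_step hs j]; push_cast; omega)
  simp only [bt, h1, h2, h3, h4, h5, h6, sg_succ j,
    show N+2+s = N+s+2 by omega, show N+1+s = N+s+1 by omega]
  linear_combination (sg j) * hstar

noncomputable def F (s N : ℕ) : PowerSeries ℚ :=
  ∑ n ∈ Finset.range (N+1), q^(n^2 + s*n) * Gz (N - n) (n:ℤ)

lemma F_zero (s : ℕ) : F s 0 = 1 := by
  rw [F]
  simp [Gz_zero]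

lemma F_one (s : ℕ) : F s 1 = 1 := by
  rw [F, Finset.sum_range_succ, Finset.sum_range_succ, Finset.sum_range_zero,
    show ((0:ℕ):ℤ) = 0 by norm_num, Gz_zero,
    Gz_gt (by norm_num : ((0:ℕ):ℤ) < ((1:ℕ):ℤ))]
  simp

lemma F_rec (s N : ℕ) : F s (N+2) = F s (N+1) + q^(N+s+1) * F s N := by
  rw [F, Finset.sum_range_succ, Nat.sub_self,
    Gz_gt (by push_cast; omega : ((0:ℕ):ℤ) < ((N+2:ℕ):ℤ)), mul_zero, add_zero]
  have step : ∀ n ∈ Finset.range (N+2),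
      q^(n^2 + s*n) * Gz (N+2-n) (n:ℤ)
        = q^(n^2 + s*n) * Gz (N+1-n) (n:ℤ)
          + q^(n^2 + s*n) * q^((((N+1-n:ℕ):ℤ)+1-(n:ℤ)).toNat) * Gz (N+1-n) ((n:ℤ)-1) := by
    intro n hn
    simp only [Finset.mem_range] at hn
    rw [show N+2-n = (N+1-n)+1 by omega, ruleB (N+1-n) (n:ℤ)]
    ring
  rw [Finset.sum_congr rfl step, Finset.sum_add_distrib]
  congr 1
  rw [Finset.sum_range_succ']
  rw [show ((0:ℕ):ℤ) - 1 = -1 by norm_num]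
  rw [Gz_neg (by norm_num : (-1:ℤ) < 0), mul_zero, add_zero]
  rw [F, Finset.mul_sum]
  apply Finset.sum_congr rfl
  intro m hm
  simp only [Finset.mem_range] at hm
  rw [show ((m+1:ℕ):ℤ) - 1 = (m:ℤ) by push_cast; ring,
    show N+1-(m+1) = N - m by omega]
  by_cases h2 : 2*m ≤ N
  · rw [show ((((N-m:ℕ):ℤ))+1-((m+1:ℕ):ℤ)).toNat = N - 2*m by push_cast; omega,
      ← pow_add,
      show (m + 1) ^ 2 + s * (m + 1) + (N - 2 * m) = N+s+1 + (m^2+s*m) by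
        obtain ⟨t, ht⟩ : ∃ t, N = t + 2*m := ⟨N-2*m, by omega⟩
        subst ht
        rw [show t + 2*m - 2*m = t by omega]
        ring,
      pow_add, mul_assoc]
  · rw [Gz_gt (by push_cast; omega : (((N-m:ℕ)):ℤ) < (m:ℤ))]
    ring
  
lemma D_zero {s : ℕ} (hs : s ≤ 1) : D s 0 = 1 := by
  rw [D]
  rw [Finset.sum_eq_single 0]
  · rw [bt, sg, if_pos Even.zero, show E s 0 = 0 by simp [E],
      show (((0:ℕ):ℤ) - 5*0)/2 = 0 by norm_num, Gz_zero]
    simp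
  · intro j hj hj0
    rw [bt]
    rcases lt_or_gt_of_ne hj0 with h | h
    · rw [Gz_gt (by push_cast; omega : ((0 + s : ℕ):ℤ) < (((0:ℕ):ℤ) - 5*j)/2)]; ring
    · rw [Gz_neg (by push_cast; omega : (((0:ℕ):ℤ) - 5*j)/2 < 0)]; ring
  · exact fun h => absurd (Finset.mem_Icc.mpr ⟨by omega, by omega⟩) h

lemma D_one {s : ℕ} (hs : s ≤ 1) : D s 1 = 1 := by
  rw [D]
  rw [Finset.sum_eq_single 0]
  · rw [bt, sg, if_pos Even.zero, show E s 0 = 0 by simp [E],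
      show (((1:ℕ):ℤ) - 5*0)/2 = 0 by norm_num, Gz_zero]
    simp
  · intro j hj hj0
    rw [bt]
    rcases lt_or_gt_of_ne hj0 with h | h
    · rw [Gz_gt (by push_cast; omega : ((1 + s : ℕ):ℤ) < (((1:ℕ):ℤ) - 5*j)/2)]; ring
    · rw [Gz_neg (by push_cast; omega : (((1:ℕ):ℤ) - 5*j)/2 < 0)]; ring
  · exact fun h => absurd (Finset.mem_Icc.mpr ⟨by omega, by omega⟩) h

lemma D_rec {s : ℕ} (hs : s ≤ 1) (N : ℕ) : D s (N+2) = D s (N+1) + q^(N+s+1) * D s N := by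
  have e2 : D s (N+2) = ∑ j ∈ Finset.Icc (-(N:ℤ)-9) ((N:ℤ)+12), bt s (N+2) j :=
    (sum_bt hs (by push_cast; omega) (by push_cast; omega)).symm
  have e1 : D s (N+1) = ∑ j ∈ Finset.Icc (-(N:ℤ)-9) ((N:ℤ)+12), bt s (N+1) j :=
    (sum_bt hs (by push_cast; omega) (by push_cast; omega)).symm
  have e0 : D s N = ∑ j ∈ Finset.Icc (-(N:ℤ)-9) ((N:ℤ)+12), bt s N j :=
    (sum_bt hs (by push_cast; omega) (by push_cast; omega)).symm
  rw [e2, e1, e0, Finset.mul_sum, ← Finset.sum_add_distrib, ← sub_eq_zero,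
    ← Finset.sum_sub_distrib]
  have goal_eq : ∀ j ∈ Finset.Icc (-(N:ℤ)-9) ((N:ℤ)+12),
      bt s (N+2) j - (bt s (N+1) j + q^(N+s+1) * bt s N j)
        = bt s (N+2) j - bt s (N+1) j - q^(N+s+1) * bt s N j := by
    intro j _; ring
  rw [Finset.sum_congr rfl goal_eq]
  apply Finset.sum_involution
    (g := fun a _ => if ((N:ℤ) + 2 - 5*a) % 2 = 0 then a - 1 else a + 1)
  · intro a ha
    by_cases hpar : ((N:ℤ) + 2 - 5*a) % 2 = 0
    · simp only [if_pos hpar]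
      obtain ⟨k, hk⟩ : ∃ k, (N:ℤ) + 2 - 5*(a-1) = 2*k+1 := ⟨((N:ℤ) + 2 - 5*(a-1))/2, by omega⟩
      have := pair hs N (a-1) k hk
      rw [show a - 1 + 1 = a by ring] at this
      linear_combination this
    · simp only [if_neg hpar]
      obtain ⟨k, hk⟩ : ∃ k, (N:ℤ) + 2 - 5*a = 2*k+1 := ⟨((N:ℤ) + 2 - 5*a)/2, by omega⟩
      exact pair hs N a k hk
  · intro a ha _
    split_ifs <;> omega
  · intro a ha
    simp only [Finset.mem_Icc] at ha ⊢
    split_ifs with h <;> omega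
  · intro a ha
    by_cases hpar : ((N:ℤ) + 2 - 5*a) % 2 = 0
    · simp only [if_pos hpar]
      rw [if_neg (by omega)]
      ring
    · simp only [if_neg hpar]
      rw [if_pos (by omega)]
      ring

lemma F_eq_D {s : ℕ} (hs : s ≤ 1) : ∀ N, F s N = D s N := by
  have key : ∀ N, F s N = D s N ∧ F s (N+1) = D s (N+1) := by
    intro N
    induction N with
    | zero => exact ⟨by rw [F_zero, D_zero hs], by rw [F_one, D_one hs]⟩
    | succ n ih => exact ⟨ih.2, by rw [F_rec, D_rec hs, ih.1, ih.2]⟩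
  exact fun N => (key N).1

end RR3

/-! ### pochInf and pentagon terms -/
namespace RR4
open PowerSeries Finset Filter Topology RR RR2 RR3

lemma prod_sub_one {D : ℕ} {T : Finset ℕ} {f : ℕ → PowerSeries ℚ}
    (h : ∀ i ∈ T, (PowerSeries.X : PowerSeries ℚ)^D ∣ f i - 1) :
    (PowerSeries.X : PowerSeries ℚ)^D ∣ (∏ i ∈ T, f i) - 1 := by
  induction T using Finset.cons_induction with
  | empty => simp
  | cons a T ha ih =>
    rw [Finset.prod_cons]
    have h1 := h a (Finset.mem_cons_self a T)
    have h2 := ih (fun i hi => h i (Finset.mem_cons_of_mem hi))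
    have : f a * ∏ i ∈ T, f i - 1 = f a * ((∏ i ∈ T, f i) - 1) + (f a - 1) := by ring
    rw [this]
    exact dvd_add (h2.mul_left _) h1

noncomputable def Linf : PowerSeries ℚ := PowerSeries.mk fun d => PowerSeries.coeff d (poch d)

lemma coeff_prod_eq (d : ℕ) (S : Finset ℕ) (hS : Finset.range d ⊆ S) :
    PowerSeries.coeff d (∏ i ∈ S, (1 - q^(i+1))) = PowerSeries.coeff d (poch d) := by
  apply coeff_eq_of_dvd (d := d+1) ?_ (by omega)
  rw [← Finset.prod_sdiff hS]
  have h1 : (PowerSeries.X : PowerSeries ℚ)^(d+1) ∣ (∏ i ∈ S \ Finset.range d, (1 - q^(i+1))) - 1 := by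
    apply prod_sub_one
    intro i hi
    simp only [Finset.mem_sdiff, Finset.mem_range, not_lt] at hi
    have : (1:PowerSeries ℚ) - q^(i+1) - 1 = -(q^(i+1)) := by ring
    rw [this, q]
    exact (pow_dvd_pow _ (by omega)).neg_right
  have : (∏ i ∈ S \ Finset.range d, (1 - q^(i+1))) * (∏ i ∈ Finset.range d, (1 - q^(i+1)))
      - poch d
      = ((∏ i ∈ S \ Finset.range d, (1 - q^(i+1))) - 1) * poch d := by
    rw [poch]; ring
  rw [this]
  exact h1.mul_right _

lemma hasProd_pochInf : HasProd (fun i : ℕ => 1 - q^(i+1)) Linf := by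
  rw [hasProd_iff_coeff]
  intro d
  have : PowerSeries.coeff d Linf = PowerSeries.coeff d (poch d) := by simp [Linf]
  rw [this]
  have hconst : Tendsto (fun _ : Finset ℕ => (PowerSeries.coeff d) (poch d)) atTop
      (𝓝 ((PowerSeries.coeff d) (poch d))) := tendsto_const_nhds
  refine hconst.congr' ?_
  filter_upwards [Filter.eventually_ge_atTop (Finset.range d)] with S hS
  exact (coeff_prod_eq d S hS).symm

lemma pochInf_eq : pochInf = Linf := hasProd_pochInf.tprod_eq

lemma coeff_pochInf {d m : ℕ} (h : d ≤ m) :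
    PowerSeries.coeff d pochInf = PowerSeries.coeff d (poch m) := by
  rw [pochInf_eq]
  have h1 : PowerSeries.coeff d Linf = PowerSeries.coeff d (poch d) := by simp [Linf]
  rw [h1]
  exact (coeff_eq_of_dvd (d := d+1) (X_pow_dvd_poch_sub (by omega) h) (by omega)).symm

lemma pochInf_sub_dvd {d m : ℕ} (h : d ≤ m) :
    (PowerSeries.X : PowerSeries ℚ)^(d+1) ∣ pochInf - poch m := by
  rw [PowerSeries.X_pow_dvd_iff]
  intro k hk
  rw [map_sub, coeff_pochInf (by omega : k ≤ m), sub_self]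

lemma constantCoeff_pochInf : PowerSeries.constantCoeff pochInf = 1 := by
  have h0 := coeff_pochInf (le_refl 0)
  rw [poch_zero] at h0
  rw [← PowerSeries.coeff_zero_eq_constantCoeff, h0]
  simp

lemma pochInf_mul_inv : pochInf * pochInf⁻¹ = 1 :=
  PowerSeries.mul_inv_cancel _ (by rw [constantCoeff_pochInf]; norm_num)

lemma inv_congr {D : ℕ} {A B : PowerSeries ℚ}
    (hA : PowerSeries.constantCoeff A ≠ 0) (hB : PowerSeries.constantCoeff B ≠ 0)
    (h : (PowerSeries.X : PowerSeries ℚ)^D ∣ A - B) :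
    (PowerSeries.X : PowerSeries ℚ)^D ∣ A⁻¹ - B⁻¹ := by
  have hA1 : A * A⁻¹ = 1 := PowerSeries.mul_inv_cancel _ hA
  have hB1 : B * B⁻¹ = 1 := PowerSeries.mul_inv_cancel _ hB
  have key : A⁻¹ - B⁻¹ = A⁻¹ * (B - A) * B⁻¹ := by
    calc A⁻¹ - B⁻¹ = A⁻¹ * (B * B⁻¹) - (A⁻¹ * A) * B⁻¹ := by
          rw [hB1, mul_comm A⁻¹ A, hA1, mul_one, one_mul]
      _ = A⁻¹ * (B - A) * B⁻¹ := by ring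
  rw [key]
  have h' : (PowerSeries.X : PowerSeries ℚ)^D ∣ B - A := by
    have := h.neg_right
    rwa [neg_sub] at this
  exact (h'.mul_left _).mul_right _

lemma E_gt {s : ℕ} (hs : s ≤ 1) {d : ℕ} {j : ℤ} (h : (d:ℤ) < j ∨ j < -(d:ℤ)) :
    (d:ℕ) < E s j := by
  have h2E := twoE hs j
  have hs' : (0:ℤ) ≤ (s:ℤ) := by positivity
  have hs1 : (s:ℤ) ≤ 1 := by exact_mod_cast hs
  have h2 : 2*(d:ℤ) < 2*(E s j : ℤ) := by
    rw [h2E]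
    rcases h with h | h
    · nlinarith [mul_nonneg hs' (by omega : (0:ℤ) ≤ j),
        mul_nonneg (by omega : (0:ℤ) ≤ j - 1) (by omega : (0:ℤ) ≤ j)]
    · nlinarith [mul_nonneg (by omega : (0:ℤ) ≤ 1 - (s:ℤ)) (by omega : (0:ℤ) ≤ -j),
        mul_nonneg (by omega : (0:ℤ) ≤ -j - 1) (by omega : (0:ℤ) ≤ -j)]
  omega

noncomputable def pt (s : ℕ) (j : ℤ) : PowerSeries ℚ := sg j * q ^ E s j

lemma coeff_pt_eq_zero {s : ℕ} {m : ℕ} {j : ℤ} (hne : E s j ≠ m) :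
    PowerSeries.coeff m (pt s j) = 0 := by
  rw [pt, sg]
  split_ifs <;>
    simp only [one_mul, neg_mul, map_neg, neg_eq_zero, q, PowerSeries.coeff_X_pow] <;>
    rw [if_neg (fun h => hne h.symm)]

lemma pt_dvd {s d : ℕ} {j : ℤ} (h : d + 1 ≤ E s j) :
    (PowerSeries.X : PowerSeries ℚ)^(d+1) ∣ pt s j := by
  rw [pt, q]
  exact ((pow_dvd_pow _ h).mul_left _)

lemma expo1 {s : ℕ} (hs : s ≤ 1) (n : ℤ) :
    (n*(10*n+1+2*(s:ℤ))).toNat = E s (2*n) := by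
  have h := twoE hs (2*n)
  have h2 : (2*n) * (5*(2*n) + 1 + 2*(s:ℤ)) = 2*(n*(10*n+1+2*(s:ℤ))) := by ring
  rw [h2] at h
  omega

lemma expo2 {s : ℕ} (hs : s ≤ 1) (n : ℤ) :
    ((2*n+1)*(5*n+2-(s:ℤ))).toNat = E s (-(2*n+1)) := by
  have h := twoE hs (-(2*n+1))
  have h2 : (-(2*n+1)) * (5*(-(2*n+1)) + 1 + 2*(s:ℤ)) = 2*((2*n+1)*(5*n+2-(s:ℤ))) := by ring
  rw [h2] at h
  omega

lemma sg_even {j : ℤ} (h : Even j) : sg j = 1 := by rw [sg, if_pos h]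

lemma sg_odd {j : ℤ} (h : ¬ Even j) : sg j = -1 := by rw [sg, if_neg h]

lemma pt_split {s : ℕ} (hs : s ≤ 1) (n : ℤ) :
    q ^ ((n * (10 * n + 1 + 2 * (s : ℤ))).toNat)
      - q ^ (((2 * n + 1) * (5 * n + 2 - (s : ℤ))).toNat)
      = pt s (2*n) + pt s (-(2*n+1)) := by
  rw [pt, pt, sg_even ⟨n, by ring⟩, sg_odd (by rw [Int.even_iff]; omega),
    expo1 hs n, expo2 hs n]
  ring

end RR4

/-! ### the two series and final assembly -/
namespace RR5
open PowerSeries Finset Filter Topology RR RR2 RR3 RR4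

lemma coeff_zero_of_dvd {F : PowerSeries ℚ} {D m : ℕ}
    (h : (PowerSeries.X : PowerSeries ℚ)^D ∣ F) (hm : m < D) :
    PowerSeries.coeff m F = 0 :=
  PowerSeries.X_pow_dvd_iff.mp h m hm

noncomputable def Tser (s : ℕ) : PowerSeries ℚ :=
  PowerSeries.mk fun m => ∑ j ∈ Finset.Icc (-(2*m:ℤ)-2) ((2*m:ℤ)+1),
    PowerSeries.coeff m (pt s j)

noncomputable def Rser (s : ℕ) : PowerSeries ℚ :=
  PowerSeries.mk fun m => ∑ n ∈ Finset.range (m+1),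
    PowerSeries.coeff m (q^(n^2 + s*n) * (poch n)⁻¹)

lemma hasSum_R (s : ℕ) : HasSum (fun n : ℕ => q^(n^2 + s*n) * (poch n)⁻¹) (Rser s) := by
  have := hasSum_of_finite (fun n : ℕ => q^(n^2 + s*n) * (poch n)⁻¹)
    (fun m => Finset.range (m+1)) ?_
  · exact this
  · intro m n hn
    simp only [Finset.mem_range, not_lt] at hn
    apply coeff_zero_of_dvd (D := m+1) ?_ (by omega)
    rw [q]
    have h1 : m + 1 ≤ n^2 + s*n := by nlinarith [Nat.le_self_pow (two_ne_zero) n]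
    exact (pow_dvd_pow _ h1).mul_right _

lemma reindex {s : ℕ} (hs : s ≤ 1) (m : ℕ) :
    ∑ n ∈ Finset.Icc (-(m:ℤ)-1) (m:ℤ),
        PowerSeries.coeff m (q ^ ((n * (10 * n + 1 + 2 * (s:ℤ))).toNat)
          - q ^ (((2 * n + 1) * (5 * n + 2 - (s:ℤ))).toNat))
      = ∑ j ∈ Finset.Icc (-(2*m:ℤ)-2) ((2*m:ℤ)+1), PowerSeries.coeff m (pt s j) := by
  have hg : ∀ n ∈ Finset.Icc (-(m:ℤ)-1) (m:ℤ),
      PowerSeries.coeff m (q ^ ((n * (10 * n + 1 + 2 * (s:ℤ))).toNat)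
          - q ^ (((2 * n + 1) * (5 * n + 2 - (s:ℤ))).toNat))
        = PowerSeries.coeff m (pt s (2*n)) + PowerSeries.coeff m (pt s (-(2*n+1))) := by
    intro n _
    rw [pt_split hs n, map_add]
  rw [Finset.sum_congr rfl hg, Finset.sum_add_distrib,
    ← Finset.sum_filter_add_sum_filter_not (Finset.Icc (-(2*m:ℤ)-2) ((2*m:ℤ)+1)) (fun j => Even j)]
  congr 1
  · apply Finset.sum_nbij' (i := fun n => 2*n) (j := fun j => j/2)
    · intro a ha
      simp only [Finset.mem_Icc] at ha
      simp only [Finset.mem_filter, Finset.mem_Icc, Int.even_iff]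
      omega
    · intro a ha
      simp only [Finset.mem_filter, Finset.mem_Icc, Int.even_iff] at ha
      simp only [Finset.mem_Icc]
      omega
    · intro a _; omega
    · intro a ha
      simp only [Finset.mem_filter, Finset.mem_Icc, Int.even_iff] at ha
      omega
    · intro a _; rfl
  · apply Finset.sum_nbij' (i := fun n => -(2*n+1)) (j := fun j => (-j-1)/2)
    · intro a ha
      simp only [Finset.mem_Icc] at ha
      simp only [Finset.mem_filter, Finset.mem_Icc, Int.even_iff]
      omega
    · intro a ha
      simp only [Finset.mem_filter, Finset.mem_Icc, Int.even_iff] at ha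
      simp only [Finset.mem_Icc]
      omega
    · intro a _; omega
    · intro a ha
      simp only [Finset.mem_filter, Finset.mem_Icc, Int.even_iff] at ha
      omega
    · intro a _; rfl

lemma hasSum_T {s : ℕ} (hs : s ≤ 1) :
    HasSum (fun n : ℤ => q ^ ((n * (10 * n + 1 + 2 * (s:ℤ))).toNat)
        - q ^ (((2 * n + 1) * (5 * n + 2 - (s:ℤ))).toNat)) (Tser s) := by
  have key := hasSum_of_finite
    (fun n : ℤ => q ^ ((n * (10 * n + 1 + 2 * (s:ℤ))).toNat)
        - q ^ (((2 * n + 1) * (5 * n + 2 - (s:ℤ))).toNat))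
    (fun m => Finset.Icc (-(m:ℤ)-1) (m:ℤ)) ?_
  · have : (PowerSeries.mk fun m => ∑ n ∈ Finset.Icc (-(m:ℤ)-1) (m:ℤ),
        PowerSeries.coeff m (q ^ ((n * (10 * n + 1 + 2 * (s:ℤ))).toNat)
          - q ^ (((2 * n + 1) * (5 * n + 2 - (s:ℤ))).toNat))) = Tser s := by
      apply PowerSeries.ext
      intro m
      rw [PowerSeries.coeff_mk, Tser, PowerSeries.coeff_mk]
      exact reindex hs m
    rwa [this] at key
  · intro m n hn
    simp only [Finset.mem_Icc, not_and_or, not_le] at hn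
    rw [pt_split hs n, map_add,
      coeff_pt_eq_zero (Nat.ne_of_gt (E_gt hs (by omega))),
      coeff_pt_eq_zero (Nat.ne_of_gt (E_gt hs (by omega))), add_zero]

lemma claimR {s : ℕ} (hs : s ≤ 1) (d : ℕ) :
    PowerSeries.coeff d (Rser s) = PowerSeries.coeff d (F s (7*d+9)) := by
  set M := 7*d+9 with hM
  rw [Rser, PowerSeries.coeff_mk, F, map_sum]
  rw [← Finset.sum_subset (Finset.range_subset_range.mpr (by omega : d+1 ≤ M+1))
    (fun n _ hn => ?_)]
  · apply Finset.sum_congr rfl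
    intro n hn
    simp only [Finset.mem_range] at hn
    apply coeff_eq_of_dvd (d := d+1) ?_ (by omega)
    have hGz : Gz (M - n) ((n:ℕ):ℤ) = poch (M-n) * (poch n)⁻¹ * (poch (M-n-n))⁻¹ := by
      rw [Gz_of_mem (by positivity) (by push_cast; omega), Int.toNat_natCast]
    rw [hGz]
    have h1 : (PowerSeries.X : PowerSeries ℚ)^(d+1) ∣ (poch n)⁻¹ - poch (M-n) * (poch n)⁻¹ * (poch (M-n-n))⁻¹ := by
      have hB1 : poch (M-n-n) * (poch (M-n-n))⁻¹ = 1 := poch_mul_inv _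
      have key : (poch n)⁻¹ - poch (M-n) * (poch n)⁻¹ * (poch (M-n-n))⁻¹
          = ((poch (M-n-n) - poch (M-n)) * (poch (M-n-n))⁻¹) * (poch n)⁻¹ := by
        calc (poch n)⁻¹ - poch (M-n) * (poch n)⁻¹ * (poch (M-n-n))⁻¹
            = (poch (M-n-n) * (poch (M-n-n))⁻¹) * (poch n)⁻¹
              - poch (M-n) * (poch n)⁻¹ * (poch (M-n-n))⁻¹ := by rw [hB1, one_mul]
          _ = ((poch (M-n-n) - poch (M-n)) * (poch (M-n-n))⁻¹) * (poch n)⁻¹ := by ring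
      rw [key]
      have hd : (PowerSeries.X : PowerSeries ℚ)^(d+1) ∣ poch (M-n-n) - poch (M-n) := by
        have := dvd_neg.mpr (X_pow_dvd_poch_sub (d := d+1) (a := M-n-n) (b := M-n)
          (by omega) (by omega))
        rwa [neg_sub] at this
      exact (hd.mul_right _).mul_right _
    have := dvd_mul_of_dvd (q^(n^2+s*n)) h1
    exact this
  · simp only [Finset.mem_range, not_lt] at hn
    apply coeff_zero_of_dvd (D := d+1) ?_ (by omega)
    rw [q]
    have h1 : d + 1 ≤ n^2 + s*n := by nlinarith [Nat.le_self_pow (two_ne_zero) n]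
    exact (pow_dvd_pow _ h1).mul_right _

lemma claimD {s : ℕ} (hs : s ≤ 1) (d : ℕ) :
    PowerSeries.coeff d (pochInf⁻¹ * Tser s) = PowerSeries.coeff d (D s (7*d+9)) := by
  set M := 7*d+9 with hM
  set SS := ∑ j ∈ Finset.Icc (-(M:ℤ)-9) ((M:ℤ)+12), pt s j with hSS
  have hTS : (PowerSeries.X : PowerSeries ℚ)^(d+1) ∣ Tser s - SS := by
    rw [PowerSeries.X_pow_dvd_iff]
    intro m hm
    rw [map_sub, sub_eq_zero, Tser, PowerSeries.coeff_mk, hSS, map_sum]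
    apply Finset.sum_subset
    · apply Finset.Icc_subset_Icc <;> omega
    · intro j hj hnj
      simp only [Finset.mem_Icc, not_and_or, not_le] at hj hnj
      exact coeff_pt_eq_zero (Nat.ne_of_gt (E_gt hs (by omega)))
  have hDS : (PowerSeries.X : PowerSeries ℚ)^(d+1) ∣ pochInf⁻¹ * SS - D s M := by
    rw [hSS, D, Finset.mul_sum, ← Finset.sum_sub_distrib]
    apply Finset.dvd_sum
    intro j hj
    simp only [Finset.mem_Icc] at hj
    by_cases hE : d + 1 ≤ E s j
    · have h1 : (PowerSeries.X : PowerSeries ℚ)^(d+1) ∣ pochInf⁻¹ * pt s j :=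
        (pt_dvd hE).mul_left _
      have h2 : (PowerSeries.X : PowerSeries ℚ)^(d+1) ∣ bt s M j := by
        rw [bt, q]
        exact (((pow_dvd_pow (PowerSeries.X : PowerSeries ℚ) hE).mul_right _).mul_left _)
      exact dvd_sub h1 h2
    · have hjd : -(d:ℤ) ≤ j ∧ j ≤ (d:ℤ) := by
        constructor <;> by_contra hc
        · exact hE (E_gt hs (by omega))
        · exact hE (E_gt hs (by omega))
      set k : ℤ := ((M:ℤ) - 5*j)/2 with hk
      have hkb : (d:ℤ)+1 ≤ k ∧ k + (d:ℤ) + 1 ≤ (M:ℤ) + s := by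
        constructor <;> [skip; skip] <;> (push_cast; omega)
      have hGzmem : Gz (M + s) k = poch (M+s) * (poch k.toNat)⁻¹ * (poch (M+s-k.toNat))⁻¹ :=
        Gz_of_mem (by omega) (by push_cast; omega)
      have c1 : (PowerSeries.X : PowerSeries ℚ)^(d+1) ∣ poch (M+s) - pochInf := by
        have := dvd_neg.mpr (pochInf_sub_dvd (by omega : d ≤ M + s))
        rwa [neg_sub] at this
      have c2 : (PowerSeries.X : PowerSeries ℚ)^(d+1) ∣ (poch k.toNat)⁻¹ - pochInf⁻¹ := by
        apply inv_congr (by rw [constantCoeff_poch]; norm_num)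
          (by rw [constantCoeff_pochInf]; norm_num)
        have := dvd_neg.mpr (pochInf_sub_dvd (by omega : d ≤ k.toNat))
        rwa [neg_sub] at this
      have c3 : (PowerSeries.X : PowerSeries ℚ)^(d+1) ∣ (poch (M+s-k.toNat))⁻¹ - pochInf⁻¹ := by
        apply inv_congr (by rw [constantCoeff_poch]; norm_num)
          (by rw [constantCoeff_pochInf]; norm_num)
        have := dvd_neg.mpr (pochInf_sub_dvd (by omega : d ≤ M + s - k.toNat))
        rwa [neg_sub] at this
      have hGz : (PowerSeries.X : PowerSeries ℚ)^(d+1) ∣ Gz (M+s) k - pochInf⁻¹ := by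
        rw [hGzmem]
        have := dvd_sub_mul (dvd_sub_mul c1 c2) c3
        rwa [pochInf_mul_inv, one_mul] at this
      have key : pochInf⁻¹ * pt s j - bt s M j
          = (sg j * q ^ E s j) * (pochInf⁻¹ - Gz (M+s) k) := by
        rw [pt, bt]; ring
      rw [key]
      apply Dvd.dvd.mul_left
      have := dvd_neg.mpr hGz
      rwa [neg_sub] at this
  have hcomb : (PowerSeries.X : PowerSeries ℚ)^(d+1) ∣ pochInf⁻¹ * Tser s - D s M := by
    have : pochInf⁻¹ * Tser s - D s M
        = pochInf⁻¹ * (Tser s - SS) + (pochInf⁻¹ * SS - D s M) := by ring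
    rw [this]
    exact dvd_add (hTS.mul_left _) hDS
  exact coeff_eq_of_dvd hcomb (by omega)

end RR5


theorem rr_alternating_eq_sum (s : ℕ) (hs : s ≤ 1) :
    pochInf⁻¹ *
      (∑' n : ℤ, (q ^ ((n * (10 * n + 1 + 2 * (s : ℤ))).toNat)
        - q ^ (((2 * n + 1) * (5 * n + 2 - (s : ℤ))).toNat))) =
    ∑' n : ℕ, q ^ (n ^ 2 + s * n) * (poch n)⁻¹ := by
  rw [(RR5.hasSum_T hs).tsum_eq, (RR5.hasSum_R s).tsum_eq]
  apply PowerSeries.ext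
  intro d
  calc PowerSeries.coeff d (pochInf⁻¹ * RR5.Tser s)
      = PowerSeries.coeff d (RR3.D s (7*d+9)) := RR5.claimD hs d
    _ = PowerSeries.coeff d (RR3.F s (7*d+9)) := by rw [RR3.F_eq_D hs]
    _ = PowerSeries.coeff d (RR5.Rser s) := (RR5.claimR hs d).symm
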